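/- Let G = (V, E) be a connected finite simple graph and π a sign function on G. Then ρ(G) is an eigenvalue of A_π if and only if there exists a diagonal matrix D with diagonal entries ±1 such that A_π = D A_G D; and −ρ(G) is an eigenvalue of A_π if and only if there exists such a D with A_π = −D A_G D. -/

import Mathlib

open Matrix SimpleGraph

/-- The signed adjacency matrix of a graph `G` with sign function `π` on its edge set. -/
noncomputable def signedAdj {V : Type*} [Fintype V] [DecidableEq V] (G : SimpleGraph V)
    [DecidableRel G.Adj] (π : G.edgeSet → ℤˣ) : Matrix V V ℝ :=
  Matrix.of fun u v =>
    if h : G.Adj u v then ((π ⟨s(u, v), (G.mem_edgeSet).mpr h⟩ : ℤ) : ℝ) else 0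

/-- `μ` is an eigenvalue of the real matrix `A`. -/
def IsEigenvalue {V : Type*} [Fintype V] (A : Matrix V V ℝ) (μ : ℝ) : Prop :=
  ∃ x : V → ℝ, x ≠ 0 ∧ A.mulVec x = μ • x

section Aux

variable {n : Type*} [Fintype n] [DecidableEq n]

lemma rayleigh_psd {A : Matrix n n ℝ} (hA : A.IsHermitian) {ρ : ℝ}
    (h : ∀ μ : ℝ, IsEigenvalue A μ → μ ≤ ρ) :
    (ρ • (1 : Matrix n n ℝ) - A).PosSemidef := by
  have heig : ∀ i, hA.eigenvalues i ≤ ρ := by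
    intro i
    refine h _ ⟨hA.eigenvectorBasis i, ?_, hA.mulVec_eigenvectorBasis i⟩
    have := hA.eigenvectorBasis.orthonormal.ne_zero i
    intro h0
    apply this
    ext j
    exact congrFun h0 j
  have hU : (hA.eigenvectorUnitary : Matrix n n ℝ) * star (hA.eigenvectorUnitary : Matrix n n ℝ) = 1 :=
    mem_unitaryGroup_iff.mp hA.eigenvectorUnitary.2
  have hdiag : diagonal (fun i => ρ - hA.eigenvalues i) =
      ρ • (1 : Matrix n n ℝ) - diagonal (RCLike.ofReal ∘ hA.eigenvalues) := by
    ext i j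
    rcases eq_or_ne i j with rfl | hij
    · simp [Matrix.diagonal_apply_eq, Matrix.one_apply]
    · simp [Matrix.diagonal_apply_ne _ hij, Matrix.one_apply_ne hij]
  have key : ρ • (1 : Matrix n n ℝ) - A =
      (hA.eigenvectorUnitary : Matrix n n ℝ) * diagonal (fun i => ρ - hA.eigenvalues i) *
        (hA.eigenvectorUnitary : Matrix n n ℝ)ᴴ := by
    rw [hdiag]
    rw [Matrix.mul_sub, Matrix.sub_mul]
    rw [← Matrix.star_eq_conjTranspose]
    rw [mul_smul_comm, smul_mul_assoc, Matrix.mul_one, hU]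
    rw [← Unitary.conjStarAlgAut_apply (S := ℝ), ← hA.spectral_theorem]
  rw [key]
  exact (posSemidef_diagonal_iff.mpr fun i => sub_nonneg.mpr (heig i)).mul_mul_conjTranspose_same _

lemma rayleigh_bound {A : Matrix n n ℝ} (hA : A.IsHermitian) {ρ : ℝ}
    (h : ∀ μ : ℝ, IsEigenvalue A μ → μ ≤ ρ) (y : n → ℝ) :
    y ⬝ᵥ (A *ᵥ y) ≤ ρ * (y ⬝ᵥ y) := by
  have := (rayleigh_psd hA h).dotProduct_mulVec_nonneg y
  have hexp : star y ⬝ᵥ ((ρ • (1 : Matrix n n ℝ) - A) *ᵥ y) = ρ * (y ⬝ᵥ y) - y ⬝ᵥ (A *ᵥ y) := by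
    rw [Matrix.sub_mulVec, dotProduct_sub, smul_mulVec, one_mulVec, dotProduct_smul,
      smul_eq_mul, star_trivial]
  rw [hexp] at this
  linarith

lemma rayleigh_eq {A : Matrix n n ℝ} (hA : A.IsHermitian) {ρ : ℝ}
    (h : ∀ μ : ℝ, IsEigenvalue A μ → μ ≤ ρ) (y : n → ℝ)
    (heq : y ⬝ᵥ (A *ᵥ y) = ρ * (y ⬝ᵥ y)) : A *ᵥ y = ρ • y := by
  have hps := rayleigh_psd hA h
  have hz : star y ⬝ᵥ ((ρ • (1 : Matrix n n ℝ) - A) *ᵥ y) = 0 := by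
    rw [Matrix.sub_mulVec, dotProduct_sub, smul_mulVec, one_mulVec, dotProduct_smul,
      smul_eq_mul, star_trivial, heq, sub_self]
  have := (hps.dotProduct_mulVec_zero_iff y).mp hz
  rw [Matrix.sub_mulVec, smul_mulVec, one_mulVec, sub_eq_zero] at this
  exact this.symm

omit [DecidableEq n] in
lemma isEigenvalue_neg {A : Matrix n n ℝ} {ρ : ℝ} (h : IsEigenvalue A ρ) :
    IsEigenvalue (-A) (-ρ) := by
  obtain ⟨x, hx, hAx⟩ := h
  exact ⟨x, hx, by rw [Matrix.neg_mulVec, hAx, neg_smul]⟩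

lemma switching_eigen {A B : Matrix n n ℝ} {ρ : ℝ} (d : n → ℝ)
    (hd : ∀ v, d v = 1 ∨ d v = -1) (hB : B = diagonal d * A * diagonal d)
    (h : IsEigenvalue A ρ) : IsEigenvalue B ρ := by
  obtain ⟨x, hx, hAx⟩ := h
  have hdd : ∀ v, d v * d v = 1 := fun v => by rcases hd v with h | h <;> rw [h] <;> norm_num
  have hdne : ∀ v, d v ≠ 0 := fun v => by rcases hd v with h | h <;> rw [h] <;> norm_num
  refine ⟨fun v => d v * x v, ?_, ?_⟩
  · obtain ⟨v, hv⟩ := Function.ne_iff.mp hx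
    intro h0
    exact hv (by simpa [hdne v] using congrFun h0 v)
  · have h1 : (diagonal d) *ᵥ (fun v => d v * x v) = x := by
      funext i
      rw [Matrix.mulVec_diagonal]
      rw [← mul_assoc, hdd i, one_mul]
    rw [hB, ← Matrix.mulVec_mulVec, ← Matrix.mulVec_mulVec, h1, hAx, Matrix.mulVec_smul]
    funext i
    simp [Matrix.mulVec_diagonal, mul_comm]

lemma signing_forward {V : Type*} [Fintype V] [DecidableEq V] (G : SimpleGraph V)
    [DecidableRel G.Adj] (hG : G.Connected) {ρ : ℝ}
    (hmax : ∀ μ : ℝ, IsEigenvalue (G.adjMatrix ℝ) μ → μ ≤ ρ)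
    (B : Matrix V V ℝ)
    (hB1 : ∀ u v, G.Adj u v → B u v = 1 ∨ B u v = -1)
    (hB0 : ∀ u v, ¬ G.Adj u v → B u v = 0)
    (x : V → ℝ) (hx : x ≠ 0) (hBx : B *ᵥ x = ρ • x) :
    ∃ d : V → ℝ, (∀ v, d v = 1 ∨ d v = -1) ∧
      B = Matrix.diagonal d * G.adjMatrix ℝ * Matrix.diagonal d := by
  classical
  set A : Matrix V V ℝ := G.adjMatrix ℝ with hAdef
  have hA : A.IsHermitian := by
    ext i j
    simp [A, Matrix.conjTranspose_apply, SimpleGraph.adj_comm]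
  set y : V → ℝ := fun v => |x v| with hydef
  -- termwise inequality
  have hterm : ∀ u v, x u * B u v * x v ≤ y u * A u v * y v := by
    intro u v
    by_cases h : G.Adj u v
    · have hb : |B u v| = 1 := by rcases hB1 u v h with h' | h' <;> simp [h']
      calc x u * B u v * x v ≤ |x u * B u v * x v| := le_abs_self _
        _ = y u * A u v * y v := by
            rw [abs_mul, abs_mul, hb]
            simp [A, y, h, mul_comm]
    · simp [hB0 u v h, A, h]
  have hs1 : x ⬝ᵥ (B *ᵥ x) = ∑ p : V × V, x p.1 * B p.1 p.2 * x p.2 := by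
    simp [dotProduct, Matrix.mulVec, Finset.mul_sum, Fintype.sum_prod_type, mul_assoc]
  have hs2 : y ⬝ᵥ (A *ᵥ y) = ∑ p : V × V, y p.1 * A p.1 p.2 * y p.2 := by
    simp [dotProduct, Matrix.mulVec, Finset.mul_sum, Fintype.sum_prod_type, mul_assoc]
  have hyy : y ⬝ᵥ y = x ⬝ᵥ x := by
    simp [dotProduct, y, abs_mul_abs_self]
  have hxBx : x ⬝ᵥ (B *ᵥ x) = ρ * (x ⬝ᵥ x) := by
    rw [hBx, dotProduct_smul, smul_eq_mul]
  have hle : x ⬝ᵥ (B *ᵥ x) ≤ y ⬝ᵥ (A *ᵥ y) := by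
    rw [hs1, hs2]
    exact Finset.sum_le_sum fun p _ => hterm p.1 p.2
  have hray := rayleigh_bound hA hmax y
  have hEq : y ⬝ᵥ (A *ᵥ y) = ρ * (y ⬝ᵥ y) := by
    rw [hyy]
    exact le_antisymm (by rw [← hyy]; exact hray) (by rw [← hxBx]; exact hle)
  have hAy : A *ᵥ y = ρ • y := rayleigh_eq hA hmax y hEq
  have hsumEq : (∑ p : V × V, x p.1 * B p.1 p.2 * x p.2) =
      ∑ p : V × V, y p.1 * A p.1 p.2 * y p.2 := by
    rw [← hs1, ← hs2, hxBx, hEq, hyy]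
  have hterm_eq : ∀ u v, x u * B u v * x v = y u * A u v * y v := by
    intro u v
    exact (Finset.sum_eq_sum_iff_of_le fun p _ => hterm p.1 p.2).mp hsumEq (u, v)
      (Finset.mem_univ _)
  -- positivity of y via connectivity
  have hzero : ∀ w, y w = 0 → ∀ u, G.Adj w u → y u = 0 := by
    intro w hw u hu
    have h1 : (A *ᵥ y) w = 0 := by rw [hAy]; simp [hw]
    rw [hAdef, SimpleGraph.adjMatrix_mulVec_apply] at h1
    exact (Finset.sum_eq_zero_iff_of_nonneg fun i _ => abs_nonneg (x i)).mp h1 u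
      ((SimpleGraph.mem_neighborFinset G w u).mpr hu)
  have hwalk : ∀ ⦃w v : V⦄, G.Walk w v → y w = 0 → y v = 0 := by
    intro w v p
    induction p with
    | nil => exact id
    | cons h p ih => exact fun h0 => ih (hzero _ h0 _ h)
  obtain ⟨v0, hv0⟩ := Function.ne_iff.mp hx
  have hyne : ∀ v, x v ≠ 0 := by
    intro v hv
    exact (abs_ne_zero.mpr hv0) (hwalk (hG.preconnected v v0).some (by simp [y, hv]))
  refine ⟨fun v => x v / |x v|, fun v => ?_, ?_⟩
  · show x v / |x v| = 1 ∨ x v / |x v| = -1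
    rcases lt_trichotomy (x v) 0 with h | h | h
    · right; rw [abs_of_neg h, div_neg, div_self (hyne v)]
    · exact absurd h (hyne v)
    · left; rw [abs_of_pos h, div_self (hyne v)]
  · ext u v
    rw [Matrix.mul_diagonal, Matrix.diagonal_mul]
    by_cases h : G.Adj u v
    · have hA1 : A u v = 1 := by simp [A, h]
      have heq := hterm_eq u v
      rw [hA1] at heq ⊢
      simp only [hydef] at heq
      have habs : |x u| * |x v| ≠ 0 := by
        exact mul_ne_zero (abs_ne_zero.mpr (hyne u)) (abs_ne_zero.mpr (hyne v))
      have key : x u * x v = B u v * (|x u| * |x v|) := by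
        rcases hB1 u v h with hb | hb <;> rw [hb] <;> rw [hb] at heq <;> linarith
      rw [mul_one]
      rw [div_mul_div_comm, key, mul_div_assoc, div_self habs, mul_one]
    · rw [hB0 u v h]
      have : A u v = 0 := by simp [A, h]
      rw [this]
      ring

end Aux

theorem signed_has_pm_spectral_radius_iff_switching
    {V : Type*} [Fintype V] [DecidableEq V] (G : SimpleGraph V) [DecidableRel G.Adj]
    (hG : G.Connected) (ρ : ℝ)
    (hρ : IsEigenvalue (G.adjMatrix ℝ) ρ)
    (hmax : ∀ μ : ℝ, IsEigenvalue (G.adjMatrix ℝ) μ → μ ≤ ρ)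
    (π : G.edgeSet → ℤˣ) :
    (IsEigenvalue (signedAdj G π) ρ ↔
      ∃ d : V → ℝ, (∀ v, d v = 1 ∨ d v = -1) ∧
        signedAdj G π = Matrix.diagonal d * G.adjMatrix ℝ * Matrix.diagonal d) ∧
    (IsEigenvalue (signedAdj G π) (-ρ) ↔
      ∃ d : V → ℝ, (∀ v, d v = 1 ∨ d v = -1) ∧
        signedAdj G π = -(Matrix.diagonal d * G.adjMatrix ℝ * Matrix.diagonal d)) := by
  set B : Matrix V V ℝ := signedAdj G π with hBdef
  have hB1 : ∀ u v, G.Adj u v → B u v = 1 ∨ B u v = -1 := by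
    intro u v h
    have := Int.units_eq_one_or (π ⟨s(u, v), (G.mem_edgeSet).mpr h⟩)
    rcases this with h' | h'
    · left; simp [B, signedAdj, h, h']
    · right; simp [B, signedAdj, h, h']
  have hB0 : ∀ u v, ¬ G.Adj u v → B u v = 0 := by
    intro u v h; simp [B, signedAdj, h]
  constructor
  · constructor
    · rintro ⟨x, hx, hBx⟩
      exact signing_forward G hG hmax B hB1 hB0 x hx hBx
    · rintro ⟨d, hd, hBeq⟩
      exact switching_eigen d hd hBeq hρ
  · constructor
    · rintro ⟨x, hx, hBx⟩
      have hBx' : (-B) *ᵥ x = ρ • x := by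
        rw [Matrix.neg_mulVec, hBx, neg_smul, neg_neg]
      have h1 : ∀ u v, G.Adj u v → (-B) u v = 1 ∨ (-B) u v = -1 := by
        intro u v h
        rcases hB1 u v h with h' | h'
        · right; simp [h']
        · left; simp [h']
      have h0 : ∀ u v, ¬ G.Adj u v → (-B) u v = 0 := by
        intro u v h; simp [hB0 u v h]
      obtain ⟨d, hd, hEq⟩ := signing_forward G hG hmax (-B) h1 h0 x hx hBx'
      exact ⟨d, hd, by rw [← neg_eq_iff_eq_neg]; rw [← hEq]⟩
    · rintro ⟨d, hd, hBeq⟩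
      have : IsEigenvalue (-B) ρ :=
        switching_eigen d hd (by rw [hBeq, neg_neg]) hρ
      simpa using isEigenvalue_neg this
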